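/- arXiv:1402.4498 — 2 statements merged into one kernel-verified Lean document; each statement's English description precedes it below -/
import Mathlib

section
/- Let k be a number field and d a positive integer. Let P = (a_0,…,a_d) and Q = (b_0,…,b_d) be distinct points of ℙ^d, let L be the line through P and Q, and let φ_{PQ} be the degree ≤ d rational map ℙ^1 → ℙ^1 given by φ_{PQ}(x) = (Σ_{i=0}^d a_i x^i)/(Σ_{i=0}^d b_i x^i). Then ψ^{-1}(L(k)) ⊂ φ_{PQ}^{-1}(ℙ^1(k)); that is, every point R ∈ ℙ^1(k̄) with [k(R):k] = d and ψ(R) ∈ L(k) satisfies φ_{PQ}(R) ∈ ℙ^1(k). -/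
open scoped Classical
open NumberField IsDedekindDomain Polynomial

noncomputable section

/-! ### Places and normalized absolute values of a number field -/

/-- The set of places of a number field `K`: infinite (archimedean) places together with
finite places (nonzero prime ideals of the ring of integers). -/
def Place (K : Type*) [Field K] [NumberField K] :=
  InfinitePlace K ⊕ HeightOneSpectrum (𝓞 K)

/-- The order of vanishing of `x` at a finite place `v`. -/
def finOrd {K : Type*} [Field K] [NumberField K]
    (v : HeightOneSpectrum (𝓞 K)) (x : K) : ℤ :=
  if h : v.valuation K x = 0 then 0 else -(Multiplicative.toAdd (WithZero.unzero h))

/-- The normalized absolute value `‖x‖_v = |x|_v^{[K_v:ℚ_v]/[K:ℚ]}` attached to a place `v`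
of a number field `K`, normalized so that the product formula holds. -/
def placeNorm (K : Type*) [Field K] [NumberField K] : Place K → K → ℝ
  | Sum.inl w, x => (w x) ^ ((w.mult : ℝ) / (Module.finrank ℚ K : ℝ))
  | Sum.inr v, x =>
      if x = 0 then 0
      else (Ideal.absNorm v.asIdeal : ℝ) ^ (-(finOrd v x : ℝ) / (Module.finrank ℚ K : ℝ))

/-- A place `w` of `K` lies above a place `v` of `k` (for `K` an extension of `k`)
if they define the same topology on `k`. -/
def liesAbove {k K : Type*} [Field k] [NumberField k] [Field K] [NumberField K]
    [Algebra k K] (w : Place K) (v : Place k) : Prop :=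
  ∀ x : k, placeNorm K w (algebraMap k K x) < 1 ↔ placeNorm k v x < 1

/-! ### Heights and proximity functions for `k`-rational points of `ℙⁿ` -/

variable (k : Type*) [Field k] [NumberField k]

/-- The absolute logarithmic height of a point of `ℙⁿ(k)`. -/
def heightK {n : ℕ} (P : Projectivization k (Fin (n + 1) → k)) : ℝ :=
  ∑ᶠ v : Place k,
    Real.log (Finset.univ.sup' Finset.univ_nonempty fun i => placeNorm k v (P.rep i))

/-- The standard local height at `v` of a point of `ℙⁿ(k)` relative to the hyperplane with
coefficient vector `c`. -/
def hypLocal {n : ℕ} (c : Fin (n + 1) → k) (v : Place k)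
    (P : Projectivization k (Fin (n + 1) → k)) : ℝ :=
  Real.log ((Finset.univ.sup' Finset.univ_nonempty fun i => placeNorm k v (c i)) *
    (Finset.univ.sup' Finset.univ_nonempty fun i => placeNorm k v (P.rep i)) /
    placeNorm k v (∑ i, c i * P.rep i))

/-- The proximity function `m_{H,S}` of a point of `ℙⁿ(k)` with respect to the hyperplane `H`
with coefficient vector `c` and the finite set `S` of places of `k`. -/
def mHyp {n : ℕ} (c : Fin (n + 1) → k) (S : Finset (Place k))
    (P : Projectivization k (Fin (n + 1) → k)) : ℝ :=
  ∑ v ∈ S, hypLocal k c v P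

/-- The standard local height `h_{Q,v}(P)` at `v` of `P ∈ ℙ¹(k)` relative to the divisor
given by the point `Q ∈ ℙ¹(k)`. -/
def ptLocalK (Q P : Projectivization k (Fin 2 → k)) (v : Place k) : ℝ :=
  Real.log (max (placeNorm k v (P.rep 0)) (placeNorm k v (P.rep 1)) *
    max (placeNorm k v (Q.rep 0)) (placeNorm k v (Q.rep 1)) /
    placeNorm k v (P.rep 0 * Q.rep 1 - P.rep 1 * Q.rep 0))

/-- The proximity function `m_{Q,S}(P)` for `k`-rational points `P` of `ℙ¹`. -/
def mPointK (Q : Projectivization k (Fin 2 → k)) (S : Finset (Place k))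
    (P : Projectivization k (Fin 2 → k)) : ℝ :=
  ∑ v ∈ S, ptLocalK k Q P v

/-! ### Heights and proximity functions for points of `ℙ¹(k̄)` of finite degree -/

/-- The field of definition `k(P)` of a point `P ∈ ℙ¹(k̄)`: the subfield of `k̄` generated
over `k` by the ratios of the homogeneous coordinates of `P`. -/
def fieldOfDef (P : Projectivization (AlgebraicClosure k) (Fin 2 → AlgebraicClosure k)) :
    IntermediateField k (AlgebraicClosure k) :=
  IntermediateField.adjoin k {x | ∃ i j, P.rep i / P.rep j = x}

instance (P : Projectivization (AlgebraicClosure k) (Fin 2 → AlgebraicClosure k)) :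
    CharZero (fieldOfDef k P) :=
  charZero_of_injective_algebraMap (algebraMap k (fieldOfDef k P)).injective

instance (P : Projectivization (AlgebraicClosure k) (Fin 2 → AlgebraicClosure k)) :
    FiniteDimensional ℚ (fieldOfDef k P) := by
  have hfin : {x | ∃ i j : Fin 2, P.rep i / P.rep j = x}.Finite := by
    have : {x | ∃ i j : Fin 2, P.rep i / P.rep j = x}
        = Set.range (fun p : Fin 2 × Fin 2 => P.rep p.1 / P.rep p.2) := by
      ext x
      constructor
      · rintro ⟨i, j, rfl⟩; exact ⟨(i, j), rfl⟩
      · rintro ⟨⟨i, j⟩, rfl⟩; exact ⟨i, j, rfl⟩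
    rw [this]
    exact Set.finite_range _
  haveI : FiniteDimensional k (fieldOfDef k P) := by
    unfold fieldOfDef
    haveI := hfin.to_subtype
    apply IntermediateField.finiteDimensional_adjoin (S := _)
    intro x _
    exact Algebra.IsIntegral.isIntegral x
  exact Module.Finite.trans k (fieldOfDef k P)

instance (P : Projectivization (AlgebraicClosure k) (Fin 2 → AlgebraicClosure k)) :
    NumberField (fieldOfDef k P) := ⟨⟩

/-- The degree `[k(P):k]` of a point `P ∈ ℙ¹(k̄)` over `k`. -/
def degOver (P : Projectivization (AlgebraicClosure k) (Fin 2 → AlgebraicClosure k)) : ℕ :=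
  Module.finrank k (fieldOfDef k P)

/-- Normalized homogeneous coordinates of `P ∈ ℙ¹(k̄)`, with values in `k(P)`. -/
def coordVec (P : Projectivization (AlgebraicClosure k) (Fin 2 → AlgebraicClosure k)) :
    Fin 2 → fieldOfDef k P :=
  if P.rep 1 ≠ 0 then
    ![⟨P.rep 0 / P.rep 1, IntermediateField.subset_adjoin k _ ⟨0, 1, rfl⟩⟩, 1]
  else ![1, 0]

/-- The absolute logarithmic height of a point `P ∈ ℙ¹(k̄)`. -/
def hBar (P : Projectivization (AlgebraicClosure k) (Fin 2 → AlgebraicClosure k)) : ℝ :=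
  ∑ᶠ w : Place (fieldOfDef k P),
    Real.log (max (placeNorm (fieldOfDef k P) w (coordVec k P 0))
      (placeNorm (fieldOfDef k P) w (coordVec k P 1)))

/-- The standard local height of `P ∈ ℙ¹(k̄)` at a place `w` of `k(P)`, relative to the
divisor given by a point `Q ∈ ℙ¹(k)`. -/
def ptLocalBar (Q : Projectivization k (Fin 2 → k))
    (P : Projectivization (AlgebraicClosure k) (Fin 2 → AlgebraicClosure k))
    (w : Place (fieldOfDef k P)) : ℝ :=
  Real.log
    (max (placeNorm (fieldOfDef k P) w (algebraMap k _ (Q.rep 0)))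
        (placeNorm (fieldOfDef k P) w (algebraMap k _ (Q.rep 1))) *
      max (placeNorm (fieldOfDef k P) w (coordVec k P 0))
        (placeNorm (fieldOfDef k P) w (coordVec k P 1)) /
      placeNorm (fieldOfDef k P) w
        (algebraMap k _ (Q.rep 1) * coordVec k P 0 - algebraMap k _ (Q.rep 0) * coordVec k P 1))

/-- The proximity function `m_{Q,S}(P)` of `P ∈ ℙ¹(k̄)` with respect to the divisor given by
the point `Q ∈ ℙ¹(k)` and the finite set of places `S` of `k`:
`m_{Q,S}(P) = ∑_{v ∈ S} ∑_{w ∈ M_{k(P)}, w ∣ v} h_{Q,w}(P)`. -/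
def mBar (Q : Projectivization k (Fin 2 → k)) (S : Finset (Place k))
    (P : Projectivization (AlgebraicClosure k) (Fin 2 → AlgebraicClosure k)) : ℝ :=
  ∑ v ∈ S, ∑ᶠ w : Place (fieldOfDef k P), if liesAbove w v then ptLocalBar k Q P w else 0

/-- The proximity function `m_{D,S}(P)` for the divisor `D = P_1 + ⋯ + P_q` on `ℙ¹`. -/
def mDiv {q : ℕ} (Pts : Fin q → Projectivization k (Fin 2 → k)) (S : Finset (Place k))
    (P : Projectivization (AlgebraicClosure k) (Fin 2 → AlgebraicClosure k)) : ℝ :=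
  ∑ i, mBar k (Pts i) S P

/-- The natural inclusion `ℙ¹(k) → ℙ¹(k̄)`. -/
def embed (P : Projectivization k (Fin 2 → k)) :
    Projectivization (AlgebraicClosure k) (Fin 2 → AlgebraicClosure k) :=
  Projectivization.mk _ (fun i => algebraMap k (AlgebraicClosure k) (P.rep i)) (by
    intro hc
    apply P.rep_nonzero
    funext i
    have := congrFun hc i
    simp only [Pi.zero_apply] at this ⊢
    exact (algebraMap k (AlgebraicClosure k)).injective (by rw [map_zero]; exact this))

/-! ### Morphisms `ℙ¹ → ℙ¹` over `k` -/

/-- A (nonconstant) `k`-morphism `ℙ¹ → ℙ¹`, given by a pair of homogeneous forms of the same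
degree with no common root in `ℙ¹(k̄)`. -/
structure P1Mor (k : Type*) [Field k] where
  deg : ℕ
  degPos : 0 < deg
  f : Fin (deg + 1) → k
  g : Fin (deg + 1) → k
  noCommonRoot : ∀ x y : AlgebraicClosure k, ¬(x = 0 ∧ y = 0) →
    ¬((∑ i : Fin (deg + 1),
          algebraMap k (AlgebraicClosure k) (f i) * x ^ (i : ℕ) * y ^ (deg - (i : ℕ))) = 0 ∧
      (∑ i : Fin (deg + 1),
          algebraMap k (AlgebraicClosure k) (g i) * x ^ (i : ℕ) * y ^ (deg - (i : ℕ))) = 0)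

namespace P1Mor

variable {k}

/-- Value of the first defining form of `φ` at `(x, y)`. -/
def evalF (φ : P1Mor k) (x y : AlgebraicClosure k) : AlgebraicClosure k :=
  ∑ i : Fin (φ.deg + 1),
    algebraMap k (AlgebraicClosure k) (φ.f i) * x ^ (i : ℕ) * y ^ (φ.deg - (i : ℕ))

/-- Value of the second defining form of `φ` at `(x, y)`. -/
def evalG (φ : P1Mor k) (x y : AlgebraicClosure k) : AlgebraicClosure k :=
  ∑ i : Fin (φ.deg + 1),
    algebraMap k (AlgebraicClosure k) (φ.g i) * x ^ (i : ℕ) * y ^ (φ.deg - (i : ℕ))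

/-- The induced map on `ℙ¹(k̄)`. -/
def apply (φ : P1Mor k)
    (P : Projectivization (AlgebraicClosure k) (Fin 2 → AlgebraicClosure k)) :
    Projectivization (AlgebraicClosure k) (Fin 2 → AlgebraicClosure k) :=
  Projectivization.mk _ ![φ.evalF (P.rep 0) (P.rep 1), φ.evalG (P.rep 0) (P.rep 1)] (by
    intro hc
    have h0 := congrFun hc 0
    have h1 := congrFun hc 1
    simp only [Matrix.cons_val_zero, Matrix.cons_val_one, Matrix.head_cons,
      Pi.zero_apply] at h0 h1
    refine φ.noCommonRoot (P.rep 0) (P.rep 1) ?_ ⟨h0, h1⟩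
    rintro ⟨ha, hb⟩
    apply P.rep_nonzero
    funext i
    fin_cases i <;> simp [ha, hb])

end P1Mor

/-- The point `0 = (0:1)` of `ℙ¹(k̄)`. -/
def zeroPt : Projectivization (AlgebraicClosure k) (Fin 2 → AlgebraicClosure k) :=
  Projectivization.mk _ ![0, 1] (by
    intro hc
    have := congrFun hc 1
    simp at this)

/-- The point `∞ = (1:0)` of `ℙ¹(k̄)`. -/
def infPt : Projectivization (AlgebraicClosure k) (Fin 2 → AlgebraicClosure k) :=
  Projectivization.mk _ ![1, 0] (by
    intro hc
    have := congrFun hc 0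
    simp at this)

/-- The set `Φ(D,d,t,k)` of `k`-morphisms `φ : ℙ¹ → ℙ¹` with `deg φ ≤ d` and
`|φ⁻¹({0,∞}) ∩ Supp D| ≥ t`, where `D = P_1 + ⋯ + P_q`. -/
def PhiSet {q : ℕ} (Pts : Fin q → Projectivization k (Fin 2 → k)) (d : ℕ) (t : ℝ) :
    Set (P1Mor k) :=
  {φ | φ.deg ≤ d ∧ t ≤
    (({P | φ.apply P = zeroPt k ∨ φ.apply P = infPt k} ∩
      Set.range fun i => embed k (Pts i)).ncard : ℝ)}

/-- The set `Z(D,d,t,k) = ⋃_{φ ∈ Φ(D,d,t,k)} φ⁻¹(ℙ¹(k)) ⊆ ℙ¹(k̄)`. -/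
def ZSet {q : ℕ} (Pts : Fin q → Projectivization k (Fin 2 → k)) (d : ℕ) (t : ℝ) :
    Set (Projectivization (AlgebraicClosure k) (Fin 2 → AlgebraicClosure k)) :=
  ⋃ φ ∈ PhiSet k Pts d t, {P | φ.apply P ∈ Set.range (embed k)}

end

noncomputable section

/-! ### Linear algebra: hyperplanes, general and subgeneral position -/

variable (F : Type*) [Field F]

/-- The linear form with coefficient vector `c`. -/
def linForm {n : ℕ} (c : Fin n → F) : (Fin n → F) →ₗ[F] F :=
  ∑ i, c i • LinearMap.proj i

/-- Hyperplanes of `ℙⁿ`, given by their coefficient vectors, are in `m`-subgeneral position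
if any at most `m + 1` of them intersect in a (projective) set of dimension at most
`m - |I|` (where `dim ∅ = -1`). -/
def InSubgeneralPosition {n q : ℕ} (m : ℕ) (c : Fin q → Fin (n + 1) → F) : Prop :=
  ∀ I : Finset (Fin q), I.card ≤ m + 1 →
    Module.finrank F ↥(⨅ i ∈ I, LinearMap.ker (linForm F (c i))) ≤ m + 1 - I.card

/-- Hyperplanes of `ℙⁿ` in general position (`n`-subgeneral position). -/
def InGeneralPosition {n q : ℕ} (c : Fin q → Fin (n + 1) → F) : Prop :=
  InSubgeneralPosition F n c

/-- The coefficient vector `(a^i b^{d-i})_{0 ≤ i ≤ d}` of the hyperplane `H_P ⊆ ℙ^d`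
attached to a point `P = (a : b) ∈ ℙ¹`. -/
def hpCoeff (d : ℕ) (P : Projectivization F (Fin 2 → F)) : Fin (d + 1) → F :=
  fun j => P.rep 0 ^ (j : ℕ) * P.rep 1 ^ (d - (j : ℕ))

/-- The symmetrization morphism `σ : (ℙ¹)^d → ℙ^d`, sending a `d`-tuple of points
`(a_j : b_j)` to the coefficient vector of the binary form `∏_j (b_j x - a_j y)`. -/
noncomputable def symMap (F : Type*) [Field F] (d : ℕ)
    (x : Fin d → Projectivization F (Fin 2 → F)) :
    Projectivization F (Fin (d + 1) → F) :=
  Projectivization.mk F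
    (fun i : Fin (d + 1) =>
      (∏ j, (Polynomial.C ((x j).rep 1) * Polynomial.X - Polynomial.C ((x j).rep 0))).coeff i)
    (by
      set p : Polynomial F :=
        ∏ j, (Polynomial.C ((x j).rep 1) * Polynomial.X - Polynomial.C ((x j).rep 0)) with hp
      intro hc
      have hpne : p ≠ 0 := by
        rw [hp]
        apply Finset.prod_ne_zero_iff.mpr
        intro j _ h0
        apply (x j).rep_nonzero
        have ha := congrArg (fun r => Polynomial.coeff r 0) h0
        have hb := congrArg (fun r => Polynomial.coeff r 1) h0
        simp only [Polynomial.coeff_sub, Polynomial.coeff_zero, Polynomial.coeff_C_mul,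
          Polynomial.coeff_X_zero, Polynomial.coeff_X_one, mul_zero, mul_one,
          Polynomial.coeff_C, zero_sub, neg_eq_zero, sub_zero, if_true, one_ne_zero,
          if_false, reduceIte] at ha hb
        funext i
        fin_cases i
        · simpa using ha
        · simpa using hb
      have hdeg : p.natDegree ≤ d := by
        rw [hp]
        refine (Polynomial.natDegree_prod_le _ _).trans ?_
        have h1 : ∀ j : Fin d,
            (Polynomial.C ((x j).rep 1) * Polynomial.X - Polynomial.C ((x j).rep 0)).natDegree
              ≤ 1 := by
          intro j
          rw [sub_eq_add_neg, ← Polynomial.C_neg]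
          exact Polynomial.natDegree_linear_le
        have h2 : ∑ j, (Polynomial.C ((x j).rep 1) * Polynomial.X -
              Polynomial.C ((x j).rep 0)).natDegree ≤ ∑ _j : Fin d, (1 : ℕ) :=
          Finset.sum_le_sum fun j _ => h1 j
        simpa using h2
      have hz := congrFun hc ⟨p.natDegree, Nat.lt_succ_of_le hdeg⟩
      simp only [Pi.zero_apply] at hz
      exact hpne (Polynomial.leadingCoeff_eq_zero.mp hz))

end

noncomputable section

open scoped Classical

variable (k : Type*) [Field k] [NumberField k]

/-- The map `ψ` from points of `ℙ¹(k̄)` of degree `d` over `k` to `ℙ^d(k)`: if `P = (α : 1)`,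
then `ψ(P)` is the coefficient vector of the minimal polynomial of `α` over `k`. -/
def psiMap (d : ℕ)
    (Q : Projectivization (AlgebraicClosure k) (Fin 2 → AlgebraicClosure k)) :
    Projectivization k (Fin (d + 1) → k) :=
  if h : (fun i : Fin (d + 1) => (minpoly k (Q.rep 0 / Q.rep 1)).coeff i) ≠ 0 then
    Projectivization.mk k _ h
  else
    Projectivization.mk k (Pi.single 0 1) (fun hc => (one_ne_zero : (1 : k) ≠ 0) (by simpa using congrFun hc 0))

/-- `[u : v]` is a `k`-rational point of `ℙ¹(k̄)`. -/
def isKRationalPair (u v : AlgebraicClosure k) : Prop :=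
  ∃ a b : k, ¬(a = 0 ∧ b = 0) ∧
    algebraMap k (AlgebraicClosure k) b * u = algebraMap k (AlgebraicClosure k) a * v

/-- A set of points of `ℙⁿ(k)` is Zariski dense if it is not contained in any proper
Zariski closed subset, equivalently in any hypersurface. -/
def ZariskiDense {n : ℕ} (R : Set (Projectivization k (Fin (n + 1) → k))) : Prop :=
  ∀ (e : ℕ) (p : MvPolynomial (Fin (n + 1)) k), p.IsHomogeneous e → p ≠ 0 →
    ∃ P ∈ R, MvPolynomial.eval P.rep p ≠ 0

/-- Membership of a point of `ℙⁿ(k)` in the hyperplane (or line, for `n = 2`) of `ℙⁿ`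
given by a point of the dual projective space. -/
def memHyp {n : ℕ} (P : Projectivization k (Fin (n + 1) → k))
    (L : Projectivization k (Fin (n + 1) → k)) : Prop :=
  ∑ i, L.rep i * P.rep i = 0

/-- The point `P ∈ ℙ²(k)` is contained in three distinct lines among the `L i`. -/
def ThreeLinesThrough {q : ℕ} (L : Fin q → Projectivization k (Fin 3 → k))
    (P : Projectivization k (Fin 3 → k)) : Prop :=
  ∃ i₁ i₂ i₃, L i₁ ≠ L i₂ ∧ L i₁ ≠ L i₃ ∧ L i₂ ≠ L i₃ ∧
    memHyp k P (L i₁) ∧ memHyp k P (L i₂) ∧ memHyp k P (L i₃)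

/-- Lines `L_1, …, L_q` of `ℙ²` are of Type I if `q > 4`, two of them coincide, and some point
lies on three distinct lines among them. -/
def TypeI {q : ℕ} (L : Fin q → Projectivization k (Fin 3 → k)) : Prop :=
  4 < q ∧ (∃ i j, i ≠ j ∧ L i = L j) ∧ ∃ P, ThreeLinesThrough k L P

/-- Lines `L_1, …, L_q` of `ℙ²` are of Type II if `q > 4`, the lines are distinct, and there
are at least three noncollinear points each lying on three distinct lines among them. -/
def TypeII {q : ℕ} (L : Fin q → Projectivization k (Fin 3 → k)) : Prop :=
  4 < q ∧ Function.Injective L ∧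
    ∃ P₁ P₂ P₃, (¬∃ M, memHyp k P₁ M ∧ memHyp k P₂ M ∧ memHyp k P₃ M) ∧
      ThreeLinesThrough k L P₁ ∧ ThreeLinesThrough k L P₂ ∧ ThreeLinesThrough k L P₃

/-- The constant `c(L_1, …, L_q)`: `5` in the Type I case, `9/2` in the Type II case, and
`4` otherwise (Type III). -/
def cLines {q : ℕ} (L : Fin q → Projectivization k (Fin 3 → k)) : ℝ :=
  if TypeI k L then 5 else if TypeII k L then 9 / 2 else 4

end


/-- Let `P = (a_0 : ⋯ : a_d)` and `Q = (b_0 : ⋯ : b_d)` be distinct points of `ℙ^d(k)`, let `L`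
be the line through `P` and `Q`, and let `φ_{PQ}(x) = (∑ a_i x^i)/(∑ b_i x^i)`.  Then
`ψ⁻¹(L(k)) ⊆ φ_{PQ}⁻¹(ℙ¹(k))`: every `R ∈ ℙ¹(k̄)` with `[k(R):k] = d` and `ψ(R) ∈ L(k)`
satisfies `φ_{PQ}(R) ∈ ℙ¹(k)`. -/
theorem psi_preimage_line (k : Type*) [Field k] [NumberField k] (d : ℕ) (hd : 0 < d)
    (P Q : Projectivization k (Fin (d + 1) → k)) (hPQ : P ≠ Q)
    (R : Projectivization (AlgebraicClosure k) (Fin 2 → AlgebraicClosure k))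
    (hR : degOver k R = d)
    (hL : (psiMap k d R).rep ∈ Submodule.span k {P.rep, Q.rep}) :
    (∑ i, algebraMap k (AlgebraicClosure k) (P.rep i) * (R.rep 0 / R.rep 1) ^ (i : ℕ)) /
        (∑ i, algebraMap k (AlgebraicClosure k) (Q.rep i) * (R.rep 0 / R.rep 1) ^ (i : ℕ)) ∈
      Set.range (algebraMap k (AlgebraicClosure k)) := by
  classical
  set α : AlgebraicClosure k := R.rep 0 / R.rep 1 with hαdef
  have hint : IsIntegral k α := Algebra.IsIntegral.isIntegral α
  -- k(R) is finite dimensional over k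
  have hfin : {x | ∃ i j : Fin 2, R.rep i / R.rep j = x}.Finite := by
    have : {x | ∃ i j : Fin 2, R.rep i / R.rep j = x}
        = Set.range (fun p : Fin 2 × Fin 2 => R.rep p.1 / R.rep p.2) := by
      ext x
      constructor
      · rintro ⟨i, j, rfl⟩; exact ⟨(i, j), rfl⟩
      · rintro ⟨⟨i, j⟩, rfl⟩; exact ⟨i, j, rfl⟩
    rw [this]
    exact Set.finite_range _
  haveI : FiniteDimensional k (fieldOfDef k R) := by
    unfold fieldOfDef
    haveI := hfin.to_subtype
    apply IntermediateField.finiteDimensional_adjoin (S := _)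
    intro x _
    exact Algebra.IsIntegral.isIntegral x
  -- the minimal polynomial of α has degree at most d
  have hmem : α ∈ fieldOfDef k R := IntermediateField.subset_adjoin k _ ⟨0, 1, rfl⟩
  have hdeg : (minpoly k α).natDegree ≤ d := by
    have h1 : minpoly k (algebraMap (fieldOfDef k R) (AlgebraicClosure k)
          (⟨α, hmem⟩ : fieldOfDef k R))
        = minpoly k (⟨α, hmem⟩ : fieldOfDef k R) :=
      minpoly.algebraMap_eq (algebraMap (fieldOfDef k R) (AlgebraicClosure k)).injective
        (⟨α, hmem⟩ : fieldOfDef k R)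
    have hαeq : algebraMap (fieldOfDef k R) (AlgebraicClosure k)
        (⟨α, hmem⟩ : fieldOfDef k R) = α := rfl
    rw [hαeq] at h1
    have h2 := minpoly.natDegree_le (A := k) (⟨α, hmem⟩ : fieldOfDef k R)
    rw [← h1] at h2
    simpa [degOver] using h2.trans_eq hR
  have hmonic : (minpoly k α).Monic := minpoly.monic hint
  -- the coefficient vector of the minimal polynomial is nonzero
  have hne : (fun i : Fin (d + 1) => (minpoly k α).coeff i) ≠ 0 := by
    intro hc
    have := congrFun hc ⟨(minpoly k α).natDegree, Nat.lt_succ_of_le hdeg⟩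
    simp only [Pi.zero_apply, Polynomial.coeff_natDegree] at this
    rw [hmonic] at this
    exact one_ne_zero this
  -- unfold psiMap
  have hpsi : psiMap k d R = Projectivization.mk k
      (fun i : Fin (d + 1) => (minpoly k α).coeff i) hne := by
    rw [psiMap, dif_pos]
  -- representative of psiMap is a scalar multiple of the coefficient vector
  have hrep : Projectivization.mk k (psiMap k d R).rep (psiMap k d R).rep_nonzero
      = Projectivization.mk k (fun i : Fin (d + 1) => (minpoly k α).coeff i) hne := by
    rw [Projectivization.mk_rep, hpsi]
  rw [Projectivization.mk_eq_mk_iff] at hrep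
  obtain ⟨c, hc⟩ := hrep
  rw [Submodule.mem_span_pair] at hL
  obtain ⟨a, b, hab⟩ := hL
  -- evaluate the linear relation at α
  have h0 : ∑ i : Fin (d + 1),
      algebraMap k (AlgebraicClosure k) ((minpoly k α).coeff i) * α ^ (i : ℕ) = 0 := by
    have hev := Polynomial.aeval_eq_sum_range' (Nat.lt_succ_of_le hdeg) α
    rw [minpoly.aeval] at hev
    rw [Fin.sum_univ_eq_sum_range
      (fun i => algebraMap k (AlgebraicClosure k) ((minpoly k α).coeff i) * α ^ i)]
    simp_rw [Algebra.smul_def] at hev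
    exact hev.symm
  set A : AlgebraicClosure k :=
    ∑ i, algebraMap k (AlgebraicClosure k) (P.rep i) * α ^ (i : ℕ) with hA
  set B : AlgebraicClosure k :=
    ∑ i, algebraMap k (AlgebraicClosure k) (Q.rep i) * α ^ (i : ℕ) with hB
  have key : algebraMap k (AlgebraicClosure k) a * A
      + algebraMap k (AlgebraicClosure k) b * B = 0 := by
    have hco : ∀ i : Fin (d + 1),
        a * P.rep i + b * Q.rep i = (c : k) * (minpoly k α).coeff i := by
      intro i
      have h1 := congrFun hab i
      have h2 := congrFun hc i
      simp only [Pi.add_apply, Pi.smul_apply, smul_eq_mul, Units.smul_def] at h1 h2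
      rw [h1, ← h2]
    calc algebraMap k (AlgebraicClosure k) a * A + algebraMap k (AlgebraicClosure k) b * B
        = ∑ i : Fin (d + 1),
            algebraMap k (AlgebraicClosure k) (a * P.rep i + b * Q.rep i) * α ^ (i : ℕ) := by
          rw [hA, hB, Finset.mul_sum, Finset.mul_sum, ← Finset.sum_add_distrib]
          refine Finset.sum_congr rfl fun i _ => ?_
          rw [map_add, map_mul, map_mul]
          ring
      _ = algebraMap k (AlgebraicClosure k) (c : k) * ∑ i : Fin (d + 1),
            algebraMap k (AlgebraicClosure k) ((minpoly k α).coeff i) * α ^ (i : ℕ) := by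
          rw [Finset.mul_sum]
          refine Finset.sum_congr rfl fun i _ => ?_
          rw [hco i, map_mul]
          ring
      _ = 0 := by rw [h0, mul_zero]
  by_cases hBz : B = 0
  · exact ⟨0, by rw [map_zero, hBz, div_zero]⟩
  · have ha : a ≠ 0 := by
      intro haz
      subst haz
      rw [map_zero, zero_mul, zero_add] at key
      rcases mul_eq_zero.mp key with hb | hB0
      · have hb0 : b = 0 := by
          exact (map_eq_zero_iff _ (algebraMap k (AlgebraicClosure k)).injective).mp hb
        subst hb0
        apply (psiMap k d R).rep_nonzero
        rw [← hab]
        simp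
      · exact hBz hB0
    have ha' : algebraMap k (AlgebraicClosure k) a ≠ 0 := by
      simpa using (map_ne_zero_iff _ (algebraMap k (AlgebraicClosure k)).injective).mpr ha
    refine ⟨-b / a, ?_⟩
    rw [map_div₀, map_neg, eq_div_iff hBz, div_mul_eq_mul_div, div_eq_iff ha']
    linear_combination -key
end

section
/- Let k be a number field, let P_1,…,P_q ∈ ℙ^1(k) be distinct points, D = Σ_{i=1}^q P_i, let d be a positive integer and t a positive real number. If t ≤ d + 1 and t ≤ deg D, then Z(D,d,t,k) = {P ∈ ℙ^1(k̄) : [k(P):k] ≤ d}. -/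
open scoped Classical
open NumberField IsDedekindDomain Polynomial

section ZPInfra

open Projectivization Polynomial

set_option linter.unusedSectionVars false

variable {k : Type*} [Field k] [NumberField k]

lemma vec2_eta {F : Type*} (v : Fin 2 → F) : v = ![v 0, v 1] := by
  funext i; fin_cases i <;> simp

lemma vec2_ne {F : Type*} [Zero F] {a b : F} (h : ¬(a = 0 ∧ b = 0)) :
    ![a, b] ≠ (0 : Fin 2 → F) := by
  intro hc
  exact h ⟨by simpa using congrFun hc 0, by simpa using congrFun hc 1⟩

lemma vec2_ne' {F : Type*} [Zero F] {a b : F} (h : ![a, b] ≠ (0 : Fin 2 → F)) :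
    ¬(a = 0 ∧ b = 0) := by
  rintro ⟨rfl, rfl⟩
  exact h (by funext i; fin_cases i <;> simp)

lemma smul_vec2 {F : Type*} [Mul F] [Zero F] (s a b : F) :
    s • ![a, b] = ![s * a, s * b] := by
  funext i; fin_cases i <;> simp

lemma mk2_eq_mk2_iff {F : Type*} [Field F] {a b c e : F}
    (h1 : ![a, b] ≠ (0 : Fin 2 → F)) (h2 : ![c, e] ≠ (0 : Fin 2 → F)) :
    Projectivization.mk F ![a, b] h1 = Projectivization.mk F ![c, e] h2 ↔ a * e = b * c := by
  rw [mk_eq_mk_iff']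
  constructor
  · rintro ⟨s, hs⟩
    have h0 := congrFun hs 0
    have h1' := congrFun hs 1
    simp [smul_vec2] at h0 h1'
    rw [← h0, ← h1']; ring
  · intro hx
    by_cases he : e ≠ 0
    · refine ⟨b / e, ?_⟩
      have hbe : b / e * e = b := div_mul_cancel₀ _ he
      have hbc : b / e * c = a := by
        rw [div_mul_eq_mul_div, div_eq_iff he, ← hx]
      rw [smul_vec2, hbe, hbc]
    · push_neg at he
      subst he
      have hc : c ≠ 0 := by
        intro h0; exact h2 (by rw [h0]; funext i; fin_cases i <;> simp)
      have hb : b = 0 := by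
        have := hx; rw [mul_zero] at this
        rcases mul_eq_zero.mp this.symm with h | h
        · exact h
        · exact absurd h hc
      refine ⟨a / c, ?_⟩
      rw [smul_vec2, div_mul_cancel₀ _ hc, mul_zero, hb]

lemma point_eq_mk2 {F : Type*} [Field F] (Q : Projectivization F (Fin 2 → F)) :
    Q = Projectivization.mk F ![Q.rep 0, Q.rep 1]
      (by rw [← vec2_eta]; exact Q.rep_nonzero) := by
  conv_lhs => rw [← Q.mk_rep]
  rw [mk_eq_mk_iff']
  exact ⟨1, by rw [one_smul, ← vec2_eta]⟩

/-! binary form evaluation -/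

variable (k) in
noncomputable def SF (D : ℕ) (f : Fin (D + 1) → k) (x y : AlgebraicClosure k) : AlgebraicClosure k :=
  ∑ i : Fin (D + 1),
    algebraMap k (AlgebraicClosure k) (f i) * x ^ (i : ℕ) * y ^ (D - (i : ℕ))

lemma evalF_eq (φ : P1Mor k) (x y : AlgebraicClosure k) :
    φ.evalF x y = SF k φ.deg φ.f x y := rfl

lemma evalG_eq (φ : P1Mor k) (x y : AlgebraicClosure k) :
    φ.evalG x y = SF k φ.deg φ.g x y := rfl

lemma SF_smul (D : ℕ) (f : Fin (D + 1) → k) (c x y : AlgebraicClosure k) :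
    SF k D f (c * x) (c * y) = c ^ D * SF k D f x y := by
  unfold SF
  rw [Finset.mul_sum]
  refine Finset.sum_congr rfl fun i _ => ?_
  have hi : (i : ℕ) ≤ D := Nat.lt_succ_iff.mp i.isLt
  have hc : c ^ (i : ℕ) * c ^ (D - (i : ℕ)) = c ^ D := by
    rw [← pow_add]; congr 1; omega
  rw [mul_pow, mul_pow, ← hc]; ring

lemma SF_rat (D : ℕ) (f : Fin (D + 1) → k) (x y : k) :
    SF k D f (algebraMap k (AlgebraicClosure k) x) (algebraMap k (AlgebraicClosure k) y)
      = algebraMap k (AlgebraicClosure k) (∑ i : Fin (D + 1), f i * x ^ (i : ℕ) * y ^ (D - (i : ℕ))) := by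
  unfold SF
  rw [map_sum]
  refine Finset.sum_congr rfl fun i _ => ?_
  rw [map_mul, map_mul, map_pow, map_pow]

lemma SF_sub (D : ℕ) (f g : Fin (D + 1) → k) (x y : AlgebraicClosure k) :
    SF k D f x y - SF k D g x y = SF k D (fun i => f i - g i) x y := by
  unfold SF
  rw [← Finset.sum_sub_distrib]
  refine Finset.sum_congr rfl fun i _ => ?_
  rw [map_sub]; ring

lemma SF_zero (D : ℕ) (f : Fin (D + 1) → k) (hf : ∀ i, f i = 0) (x y : AlgebraicClosure k) :
    SF k D f x y = 0 := by
  unfold SF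
  refine Finset.sum_eq_zero fun i _ => ?_
  rw [hf i, map_zero, zero_mul, zero_mul]

lemma SF_affine (D : ℕ) (p : Polynomial k) (hp : p.natDegree ≤ D)
    (x y : AlgebraicClosure k) (hy : y ≠ 0) :
    SF k D (fun i => p.coeff i) x y
      = y ^ D * (p.map (algebraMap k (AlgebraicClosure k))).eval (x / y) := by
  have hdeg : (p.map (algebraMap k (AlgebraicClosure k))).natDegree < D + 1 :=
    Nat.lt_succ_of_le (le_trans (Polynomial.natDegree_map_le) hp)
  rw [Polynomial.eval_eq_sum_range' hdeg]
  unfold SF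
  rw [Fin.sum_univ_eq_sum_range
    (fun i => algebraMap k (AlgebraicClosure k) (p.coeff i) * x ^ i * y ^ (D - i)),
    Finset.mul_sum]
  refine Finset.sum_congr rfl fun i hi => ?_
  have hiD : i ≤ D := Nat.lt_succ_iff.mp (Finset.mem_range.mp hi)
  rw [Polynomial.coeff_map, div_pow, pow_sub₀ y hy hiD]
  field_simp

lemma SF_inf (D : ℕ) (f : Fin (D + 1) → k) (x : AlgebraicClosure k) :
    SF k D f x 0 = algebraMap k (AlgebraicClosure k) (f (Fin.last D)) * x ^ D := by
  unfold SF
  rw [Finset.sum_eq_single (Fin.last D)]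
  · rw [Fin.val_last, Nat.sub_self, pow_zero, mul_one]
  · intro i _ hne
    have hlt : (i : ℕ) < D := Fin.val_lt_last hne
    rw [zero_pow (by omega : D - (i : ℕ) ≠ 0), mul_zero]
  · intro h
    exact absurd (Finset.mem_univ _) h

/-! polynomials from coefficient vectors -/

noncomputable def hpoly (D : ℕ) (w : Fin (D + 1) → k) : Polynomial k :=
  ∑ i : Fin (D + 1), Polynomial.C (w i) * Polynomial.X ^ (i : ℕ)

lemma hpoly_coeff (D : ℕ) (w : Fin (D + 1) → k) (i : Fin (D + 1)) :
    (hpoly D w).coeff (i : ℕ) = w i := by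
  unfold hpoly
  rw [Polynomial.finset_sum_coeff]
  rw [Finset.sum_eq_single i]
  · simp
  · intro j _ hne
    rw [Polynomial.coeff_C_mul, Polynomial.coeff_X_pow,
      if_neg (by exact fun h => hne (Fin.val_injective h.symm)), mul_zero]
  · intro h; exact absurd (Finset.mem_univ _) h

lemma hpoly_natDegree_le (D : ℕ) (w : Fin (D + 1) → k) : (hpoly D w).natDegree ≤ D := by
  unfold hpoly
  refine Polynomial.natDegree_sum_le_of_forall_le _ _ fun i _ => ?_
  refine le_trans (Polynomial.natDegree_C_mul_le _ _) ?_
  rw [Polynomial.natDegree_X_pow]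
  exact Nat.lt_succ_iff.mp i.isLt

lemma SF_hpoly (D : ℕ) (w : Fin (D + 1) → k) (x y : AlgebraicClosure k) (hy : y ≠ 0) :
    SF k D w x y
      = y ^ D * ((hpoly D w).map (algebraMap k (AlgebraicClosure k))).eval (x / y) := by
  rw [← SF_affine D (hpoly D w) (hpoly_natDegree_le D w) x y hy]
  congr 1
  funext i
  rw [hpoly_coeff]

lemma form_root (D : ℕ) (hD : 0 < D) (g : Fin (D + 1) → k) :
    ∃ x y : AlgebraicClosure k, ¬(x = 0 ∧ y = 0) ∧ SF k D g x y = 0 := by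
  by_cases hlast : g (Fin.last D) = 0
  · refine ⟨1, 0, fun h => one_ne_zero h.1, ?_⟩
    rw [SF_inf, hlast, map_zero, zero_mul]
  · set pb := (hpoly D g).map (algebraMap k (AlgebraicClosure k)) with hpb
    have hcoeff : pb.coeff D ≠ 0 := by
      rw [hpb, Polynomial.coeff_map]
      have : (hpoly D g).coeff D = g (Fin.last D) := by
        have := hpoly_coeff D g (Fin.last D)
        rwa [Fin.val_last] at this
      rw [this]
      exact fun h => hlast ((algebraMap k (AlgebraicClosure k)).injective
        (by rw [h, map_zero]))
    have hpbne : pb ≠ 0 := fun h => hcoeff (by rw [h, Polynomial.coeff_zero])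
    have hdeg : pb.degree ≠ 0 := by
      have hD' : D ≤ pb.natDegree := Polynomial.le_natDegree_of_ne_zero hcoeff
      intro h
      rw [Polynomial.degree_eq_natDegree hpbne] at h
      have : pb.natDegree = 0 := by exact_mod_cast h
      omega
    obtain ⟨z, hz⟩ := IsAlgClosed.exists_root pb hdeg
    refine ⟨z, 1, fun h => one_ne_zero h.2, ?_⟩
    rw [SF_hpoly D g z 1 one_ne_zero, div_one, ← hpb]
    rw [Polynomial.IsRoot] at hz
    rw [hz, mul_zero]

/-! embed and apply -/

lemma ek_eq_zero {x : k} (h : algebraMap k (AlgebraicClosure k) x = 0) : x = 0 :=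
  (_root_.map_eq_zero (algebraMap k (AlgebraicClosure k))).mp h

lemma ek_vec_ne (v : Fin 2 → k) (hv : v ≠ 0) :
    (fun i => algebraMap k (AlgebraicClosure k) (v i)) ≠ 0 := by
  intro hc
  apply hv
  funext i
  exact ek_eq_zero (congrFun hc i)

lemma mk_congr {F V : Type*} [DivisionRing F] [AddCommGroup V] [Module F V]
    {v w : V} (h : v = w) (hv : v ≠ 0) (hw : w ≠ 0) :
    Projectivization.mk F v hv = Projectivization.mk F w hw := by
  subst h; rfl

lemma embed_mk (v : Fin 2 → k) (hv : v ≠ 0) :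
    embed k (Projectivization.mk k v hv)
      = Projectivization.mk (AlgebraicClosure k)
          (fun i => algebraMap k (AlgebraicClosure k) (v i)) (ek_vec_ne v hv) := by
  obtain ⟨u, hu⟩ := Projectivization.exists_smul_eq_mk_rep k v hv
  unfold embed
  rw [Projectivization.mk_eq_mk_iff']
  refine ⟨algebraMap k (AlgebraicClosure k) u, ?_⟩
  funext i
  have : (Projectivization.mk k v hv).rep i = (u : k) * v i := by
    rw [← hu]; simp [Units.smul_def]
  simp [this, map_mul]

lemma embed_mk2 {a b : k} (hab : ¬(a = 0 ∧ b = 0)) :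
    embed k (Projectivization.mk k ![a, b] (vec2_ne hab))
      = Projectivization.mk (AlgebraicClosure k)
          ![algebraMap k (AlgebraicClosure k) a, algebraMap k (AlgebraicClosure k) b]
          (vec2_ne (fun h => hab ⟨ek_eq_zero h.1, ek_eq_zero h.2⟩)) := by
  rw [embed_mk]
  exact mk_congr (by funext i; fin_cases i <;> simp) _ _

lemma rep_pair_ne {F : Type*} [Field F] (P : Projectivization F (Fin 2 → F)) :
    ¬(P.rep 0 = 0 ∧ P.rep 1 = 0) := by
  rintro ⟨h0, h1⟩
  apply P.rep_nonzero
  rw [vec2_eta P.rep, h0, h1]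
  funext i; fin_cases i <;> simp

lemma apply_rational (φ : P1Mor k)
    (P : Projectivization (AlgebraicClosure k) (Fin 2 → AlgebraicClosure k))
    (a b : k) (hab : ¬(a = 0 ∧ b = 0))
    (h : algebraMap k (AlgebraicClosure k) b * φ.evalF (P.rep 0) (P.rep 1)
       = algebraMap k (AlgebraicClosure k) a * φ.evalG (P.rep 0) (P.rep 1)) :
    φ.apply P = embed k (Projectivization.mk k ![a, b] (vec2_ne hab)) := by
  rw [embed_mk2 hab]
  unfold P1Mor.apply
  rw [mk2_eq_mk2_iff]
  rw [mul_comm _ (algebraMap k (AlgebraicClosure k) b), h]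
  ring

lemma zeroPt_eq_embed : zeroPt k = embed k (Projectivization.mk k ![(0 : k), 1]
    (vec2_ne (fun h => one_ne_zero h.2))) := by
  rw [embed_mk2 (fun h => one_ne_zero h.2)]
  unfold zeroPt
  exact mk_congr (by funext i; fin_cases i <;> simp) _ _

lemma infPt_eq_embed : infPt k = embed k (Projectivization.mk k ![(1 : k), 0]
    (vec2_ne (fun h => one_ne_zero h.1))) := by
  rw [embed_mk2 (fun h => one_ne_zero h.1)]
  unfold infPt
  exact mk_congr (by funext i; fin_cases i <;> simp) _ _

lemma apply_zero_of_evalF (φ : P1Mor k)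
    (P : Projectivization (AlgebraicClosure k) (Fin 2 → AlgebraicClosure k))
    (h : φ.evalF (P.rep 0) (P.rep 1) = 0) : φ.apply P = zeroPt k := by
  rw [zeroPt_eq_embed]
  exact apply_rational φ P 0 1 (fun hc => one_ne_zero hc.2) (by rw [h]; simp)

lemma apply_inf_of_evalG (φ : P1Mor k)
    (P : Projectivization (AlgebraicClosure k) (Fin 2 → AlgebraicClosure k))
    (h : φ.evalG (P.rep 0) (P.rep 1) = 0) : φ.apply P = infPt k := by
  rw [infPt_eq_embed]
  exact apply_rational φ P 1 0 (fun hc => one_ne_zero hc.1) (by rw [h]; simp)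

lemma embed_rep (Q : Projectivization k (Fin 2 → k)) :
    ∃ u : (AlgebraicClosure k)ˣ, ∀ i,
      (embed k Q).rep i = (u : AlgebraicClosure k) * algebraMap k (AlgebraicClosure k) (Q.rep i) := by
  obtain ⟨u, hu⟩ := Projectivization.exists_smul_eq_mk_rep (AlgebraicClosure k)
    (fun i => algebraMap k (AlgebraicClosure k) (Q.rep i))
    (ek_vec_ne _ Q.rep_nonzero)
  exact ⟨u, fun i => by rw [show (embed k Q).rep = _ from hu.symm]; simp [Units.smul_def]⟩

lemma apply_embed_mem (φ : P1Mor k) (Q : Projectivization k (Fin 2 → k)) :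
    φ.apply (embed k Q) ∈ Set.range (embed k) := by
  obtain ⟨u, hu⟩ := embed_rep Q
  set Fk : k := ∑ i : Fin (φ.deg + 1), φ.f i * Q.rep 0 ^ (i : ℕ) * Q.rep 1 ^ (φ.deg - (i : ℕ))
    with hFk
  set Gk : k := ∑ i : Fin (φ.deg + 1), φ.g i * Q.rep 0 ^ (i : ℕ) * Q.rep 1 ^ (φ.deg - (i : ℕ))
    with hGk
  have hF : φ.evalF ((embed k Q).rep 0) ((embed k Q).rep 1)
      = (u : AlgebraicClosure k) ^ φ.deg * algebraMap k (AlgebraicClosure k) Fk := by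
    rw [evalF_eq, hu 0, hu 1, SF_smul, SF_rat]
  have hG : φ.evalG ((embed k Q).rep 0) ((embed k Q).rep 1)
      = (u : AlgebraicClosure k) ^ φ.deg * algebraMap k (AlgebraicClosure k) Gk := by
    rw [evalG_eq, hu 0, hu 1, SF_smul, SF_rat]
  have hFGne : ¬(Fk = 0 ∧ Gk = 0) := by
    rintro ⟨h1, h2⟩
    refine φ.noCommonRoot ((embed k Q).rep 0) ((embed k Q).rep 1) (rep_pair_ne _) ⟨?_, ?_⟩
    · show φ.evalF _ _ = 0
      rw [hF, h1, map_zero, mul_zero]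
    · show φ.evalG _ _ = 0
      rw [hG, h2, map_zero, mul_zero]
  have := apply_rational φ (embed k Q) Fk Gk hFGne (by rw [hF, hG]; ring)
  exact ⟨_, this.symm⟩

lemma SF_embed_zero (D : ℕ) (p : Polynomial k) (hdeg : p.natDegree ≤ D)
    (Q : Projectivization k (Fin 2 → k))
    (hcond : (Q.rep 1 ≠ 0 ∧ p.eval (Q.rep 0 / Q.rep 1) = 0)
      ∨ (Q.rep 1 = 0 ∧ p.coeff D = 0)) :
    SF k D (fun i => p.coeff i) ((embed k Q).rep 0) ((embed k Q).rep 1) = 0 := by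
  obtain ⟨u, hu⟩ := embed_rep Q
  rcases hcond with ⟨hrep, heval⟩ | ⟨hrep, hcoeff⟩
  · have hy : (embed k Q).rep 1 ≠ 0 := by
      rw [hu 1]
      exact mul_ne_zero (Units.ne_zero u) (fun hc => hrep (ek_eq_zero hc))
    rw [SF_affine D p hdeg _ _ hy]
    have hdiv : (embed k Q).rep 0 / (embed k Q).rep 1
        = algebraMap k (AlgebraicClosure k) (Q.rep 0 / Q.rep 1) := by
      rw [hu 0, hu 1, map_div₀]
      rw [mul_div_mul_left _ _ (Units.ne_zero u)]
    rw [hdiv, Polynomial.eval_map, Polynomial.eval₂_at_apply, heval, map_zero, mul_zero]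
  · rw [hu 1, hrep, map_zero, mul_zero, SF_inf]
    simp only [Fin.val_last]
    rw [hcoeff, map_zero, zero_mul]

lemma fin2_cases (i : Fin 2) : i = 0 ∨ i = 1 := by
  fin_cases i
  · exact Or.inl rfl
  · exact Or.inr rfl

/-! coprimality from absence of common roots -/

lemma no_common_root_coprime (p q : Polynomial k) (hp : p ≠ 0)
    (h : ∀ z : AlgebraicClosure k,
      ¬(Polynomial.eval z (p.map (algebraMap k (AlgebraicClosure k))) = 0 ∧
        Polynomial.eval z (q.map (algebraMap k (AlgebraicClosure k))) = 0)) :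
    IsCoprime p q := by
  rw [← EuclideanDomain.gcd_isUnit_iff]
  by_contra hunit
  set g := EuclideanDomain.gcd p q with hg
  have hg0 : g ≠ 0 := fun h0 => hp (EuclideanDomain.gcd_eq_zero_iff.mp h0).1
  have hdeg : g.degree ≠ 0 := fun h0 => hunit (Polynomial.isUnit_iff_degree_eq_zero.mpr h0)
  have hdegm : (g.map (algebraMap k (AlgebraicClosure k))).degree ≠ 0 := by
    rwa [Polynomial.degree_map_eq_of_injective (algebraMap k (AlgebraicClosure k)).injective]
  obtain ⟨z, hz⟩ := IsAlgClosed.exists_root _ hdegm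
  refine h z ⟨?_, ?_⟩
  · exact Polynomial.eval_eq_zero_of_dvd_of_eval_eq_zero
      (Polynomial.map_dvd _ (EuclideanDomain.gcd_dvd_left p q)) hz
  · exact Polynomial.eval_eq_zero_of_dvd_of_eval_eq_zero
      (Polynomial.map_dvd _ (EuclideanDomain.gcd_dvd_right p q)) hz

/-! morphisms from pairs of polynomials -/

noncomputable def mkMor (p q : Polynomial k) (D : ℕ) (hD : 0 < D)
    (hp : p.natDegree ≤ D) (hq : q.natDegree ≤ D) (hcop : IsCoprime p q)
    (htop : ¬(p.coeff D = 0 ∧ q.coeff D = 0)) : P1Mor k where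
  deg := D
  degPos := hD
  f := fun i => p.coeff i
  g := fun i => q.coeff i
  noCommonRoot := by
    intro x y hxy hc
    obtain ⟨hF, hG⟩ := hc
    have hF' : SF k D (fun i => p.coeff i) x y = 0 := hF
    have hG' : SF k D (fun i => q.coeff i) x y = 0 := hG
    by_cases hy : y = 0
    · subst hy
      have hx : x ≠ 0 := fun h0 => hxy ⟨h0, rfl⟩
      rw [SF_inf] at hF' hG'
      simp only [Fin.val_last] at hF' hG'
      refine htop ⟨?_, ?_⟩
      · rcases mul_eq_zero.mp hF' with h0 | h0
        · exact ek_eq_zero h0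
        · exact absurd h0 (pow_ne_zero _ hx)
      · rcases mul_eq_zero.mp hG' with h0 | h0
        · exact ek_eq_zero h0
        · exact absurd h0 (pow_ne_zero _ hx)
    · rw [SF_affine D p hp _ _ hy] at hF'
      rw [SF_affine D q hq _ _ hy] at hG'
      have hyD : y ^ D ≠ 0 := pow_ne_zero _ hy
      have h1 : Polynomial.eval (x / y) (p.map (algebraMap k (AlgebraicClosure k))) = 0 := by
        rcases mul_eq_zero.mp hF' with h0 | h0
        · exact absurd h0 hyD
        · exact h0
      have h2 : Polynomial.eval (x / y) (q.map (algebraMap k (AlgebraicClosure k))) = 0 := by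
        rcases mul_eq_zero.mp hG' with h0 | h0
        · exact absurd h0 hyD
        · exact h0
      obtain ⟨u, v, huv⟩ := hcop
      have hcontr := congrArg
        (fun r => Polynomial.eval (x / y) (r.map (algebraMap k (AlgebraicClosure k)))) huv
      simp only [Polynomial.map_add, Polynomial.map_mul, Polynomial.eval_add,
        Polynomial.eval_mul, Polynomial.map_one, Polynomial.eval_one, h1, h2,
        mul_zero, add_zero, zero_add] at hcontr
      exact zero_ne_one hcontr

/-! the degree of a point -/

lemma fieldOfDef_eq (P : Projectivization (AlgebraicClosure k) (Fin 2 → AlgebraicClosure k))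
    (h1 : P.rep 1 ≠ 0) :
    fieldOfDef k P = IntermediateField.adjoin k {P.rep 0 / P.rep 1} := by
  have hmem : P.rep 0 / P.rep 1 ∈ IntermediateField.adjoin k {P.rep 0 / P.rep 1} :=
    IntermediateField.subset_adjoin k _ rfl
  apply le_antisymm
  · rw [fieldOfDef, IntermediateField.adjoin_le_iff]
    rintro x ⟨i, j, rfl⟩
    simp only [SetLike.mem_coe]
    rcases fin2_cases i with hi | hi <;> rcases fin2_cases j with hj | hj <;> rw [hi, hj]
    · by_cases h0 : P.rep 0 = 0
      · rw [show P.rep 0 / P.rep 0 = 0 from by rw [h0, zero_div]]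
        exact zero_mem (IntermediateField.adjoin k {P.rep 0 / P.rep 1})
      · rw [div_self h0]
        exact one_mem (IntermediateField.adjoin k {P.rep 0 / P.rep 1})
    · exact hmem
    · rw [show P.rep 1 / P.rep 0 = (P.rep 0 / P.rep 1)⁻¹ from (inv_div _ _).symm]
      exact inv_mem hmem
    · rw [div_self h1]
      exact one_mem (IntermediateField.adjoin k {P.rep 0 / P.rep 1})
  · rw [IntermediateField.adjoin_le_iff]
    rintro x rfl
    exact IntermediateField.subset_adjoin k _ ⟨0, 1, rfl⟩

lemma degOver_eq (P : Projectivization (AlgebraicClosure k) (Fin 2 → AlgebraicClosure k))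
    (h1 : P.rep 1 ≠ 0) :
    degOver k P = (minpoly k (P.rep 0 / P.rep 1)).natDegree := by
  have hint : IsIntegral k (P.rep 0 / P.rep 1) := Algebra.IsIntegral.isIntegral _
  rw [degOver, fieldOfDef_eq P h1]
  exact IntermediateField.adjoin.finrank hint

lemma degOver_rep1_zero (P : Projectivization (AlgebraicClosure k) (Fin 2 → AlgebraicClosure k))
    (h1 : P.rep 1 = 0) : degOver k P = 1 := by
  have hbot : fieldOfDef k P = ⊥ := by
    apply le_antisymm _ bot_le
    rw [fieldOfDef, IntermediateField.adjoin_le_iff]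
    rintro x ⟨i, j, rfl⟩
    simp only [SetLike.mem_coe]
    rcases fin2_cases i with hi | hi <;> rcases fin2_cases j with hj | hj <;> rw [hi, hj]
    · by_cases h0 : P.rep 0 = 0
      · rw [h0, zero_div]
        exact zero_mem (⊥ : IntermediateField k (AlgebraicClosure k))
      · rw [div_self h0]
        exact one_mem (⊥ : IntermediateField k (AlgebraicClosure k))
    · rw [h1, div_zero]
      exact zero_mem (⊥ : IntermediateField k (AlgebraicClosure k))
    · rw [h1, zero_div]
      exact zero_mem (⊥ : IntermediateField k (AlgebraicClosure k))
    · rw [h1, zero_div]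
      exact zero_mem (⊥ : IntermediateField k (AlgebraicClosure k))
  rw [degOver, hbot]
  exact IntermediateField.finrank_bot

lemma rep1_zero_eq_embed (P : Projectivization (AlgebraicClosure k) (Fin 2 → AlgebraicClosure k))
    (h1 : P.rep 1 = 0) :
    P = embed k (Projectivization.mk k ![(1 : k), 0] (vec2_ne (fun h => one_ne_zero h.1))) := by
  rw [embed_mk2 (fun h => one_ne_zero h.1)]
  conv_lhs => rw [point_eq_mk2 P]
  rw [mk2_eq_mk2_iff]
  rw [h1, map_zero, map_one, mul_zero, zero_mul]

lemma embed_mem_of_degOver_le_one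
    (P : Projectivization (AlgebraicClosure k) (Fin 2 → AlgebraicClosure k))
    (h : degOver k P ≤ 1) : P ∈ Set.range (embed k) := by
  by_cases h1 : P.rep 1 = 0
  · exact ⟨_, (rep1_zero_eq_embed P h1).symm⟩
  · have hint : IsIntegral k (P.rep 0 / P.rep 1) := Algebra.IsIntegral.isIntegral _
    have he : (minpoly k (P.rep 0 / P.rep 1)).natDegree = 1 := by
      have h2 := minpoly.natDegree_pos hint
      have h3 : (minpoly k (P.rep 0 / P.rep 1)).natDegree ≤ 1 := by
        rw [← degOver_eq P h1]; exact h
      omega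
    obtain ⟨a, ha⟩ := (minpoly.natDegree_eq_one_iff).mp he
    refine ⟨Projectivization.mk k ![a, 1] (vec2_ne fun hc => one_ne_zero hc.2), ?_⟩
    rw [embed_mk2 (fun hc => one_ne_zero hc.2)]
    conv_rhs => rw [point_eq_mk2 P]
    rw [mk2_eq_mk2_iff]
    rw [map_one, one_mul, ha]
    exact div_mul_cancel₀ _ h1

/-! more SF algebra -/

lemma SF_combo (D : ℕ) (f g : Fin (D + 1) → k) (a b : k) (x y : AlgebraicClosure k) :
    algebraMap k (AlgebraicClosure k) b * SF k D f x y
      - algebraMap k (AlgebraicClosure k) a * SF k D g x y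
      = SF k D (fun i => b * f i - a * g i) x y := by
  unfold SF
  rw [Finset.mul_sum, Finset.mul_sum, ← Finset.sum_sub_distrib]
  refine Finset.sum_congr rfl fun i _ => ?_
  rw [map_sub, map_mul, map_mul]
  ring

/-! the forward inclusion -/

lemma forward_degOver (φ : P1Mor k) (d : ℕ) (hd : 0 < d) (hdeg : φ.deg ≤ d)
    (P : Projectivization (AlgebraicClosure k) (Fin 2 → AlgebraicClosure k))
    (h : φ.apply P ∈ Set.range (embed k)) : degOver k P ≤ d := by
  by_cases hy : P.rep 1 = 0
  · rw [degOver_rep1_zero P hy]; omega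
  obtain ⟨Q, hQ⟩ := h
  obtain ⟨s, hs⟩ := (Projectivization.mk_eq_mk_iff' (AlgebraicClosure k) _ _
    (ek_vec_ne _ Q.rep_nonzero) _).mp hQ
  have h0 : algebraMap k (AlgebraicClosure k) (Q.rep 0)
      = s * φ.evalF (P.rep 0) (P.rep 1) := by
    have := congrFun hs 0
    simpa using this.symm
  have h1 : algebraMap k (AlgebraicClosure k) (Q.rep 1)
      = s * φ.evalG (P.rep 0) (P.rep 1) := by
    have := congrFun hs 1
    simpa using this.symm
  set w : Fin (φ.deg + 1) → k := fun i => Q.rep 1 * φ.f i - Q.rep 0 * φ.g i with hw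
  have hSw : SF k φ.deg w (P.rep 0) (P.rep 1) = 0 := by
    rw [← SF_combo, ← evalF_eq, ← evalG_eq, h0, h1]
    ring
  by_cases hall : ∀ i, w i = 0
  · exfalso
    by_cases hb : Q.rep 1 = 0
    · have ha : Q.rep 0 ≠ 0 := fun hc => rep_pair_ne Q ⟨hc, hb⟩
      have hg : ∀ i, φ.g i = 0 := by
        intro i
        have := hall i
        rw [hw] at this
        simp only [hb, zero_mul, zero_sub, neg_eq_zero] at this
        rcases mul_eq_zero.mp this with hh | hh
        · exact absurd hh ha
        · exact hh
      obtain ⟨x, y, hxy, hroot⟩ := form_root φ.deg φ.degPos φ.f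
      exact φ.noCommonRoot x y hxy ⟨hroot, SF_zero φ.deg φ.g hg x y⟩
    · obtain ⟨x, y, hxy, hroot⟩ := form_root φ.deg φ.degPos φ.g
      have hcmb := SF_combo φ.deg φ.f φ.g (Q.rep 0) (Q.rep 1) x y
      rw [SF_zero φ.deg w hall x y] at hcmb
      rw [hroot, mul_zero] at hcmb
      have hF : SF k φ.deg φ.f x y = 0 := by
        have hbne : algebraMap k (AlgebraicClosure k) (Q.rep 1) ≠ 0 :=
          fun hc => hb (ek_eq_zero hc)
        have := sub_eq_zero.mp hcmb
        exact (mul_eq_zero.mp this).resolve_left hbne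
      exact φ.noCommonRoot x y hxy ⟨hF, hroot⟩
  · push_neg at hall
    obtain ⟨i0, hi0⟩ := hall
    have hne : hpoly φ.deg w ≠ 0 := by
      intro hc
      apply hi0
      rw [← hpoly_coeff φ.deg w i0, hc, Polynomial.coeff_zero]
    have hroot : Polynomial.aeval (P.rep 0 / P.rep 1) (hpoly φ.deg w) = 0 := by
      rw [Polynomial.aeval_def, ← Polynomial.eval_map]
      have := hSw
      rw [SF_hpoly φ.deg w _ _ hy] at this
      exact (mul_eq_zero.mp this).resolve_left (pow_ne_zero _ hy)
    have hdegle := minpoly.degree_le_of_ne_zero k (P.rep 0 / P.rep 1) hne hroot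
    have hnat := Polynomial.natDegree_le_natDegree hdegle
    rw [degOver_eq P hy]
    exact le_trans hnat (le_trans (hpoly_natDegree_le _ _) hdeg)

/-! injectivity of embed and slopes -/

lemma embed_injective : Function.Injective (embed k) := by
  intro Q Q' h
  obtain ⟨s, hs⟩ := (Projectivization.mk_eq_mk_iff' (AlgebraicClosure k) _ _
    (ek_vec_ne _ Q.rep_nonzero) (ek_vec_ne _ Q'.rep_nonzero)).mp h
  have h0 : algebraMap k (AlgebraicClosure k) (Q.rep 0)
      = s * algebraMap k (AlgebraicClosure k) (Q'.rep 0) := by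
    simpa using (congrFun hs 0).symm
  have h1 : algebraMap k (AlgebraicClosure k) (Q.rep 1)
      = s * algebraMap k (AlgebraicClosure k) (Q'.rep 1) := by
    simpa using (congrFun hs 1).symm
  have hcross : Q.rep 0 * Q'.rep 1 = Q.rep 1 * Q'.rep 0 := by
    apply (algebraMap k (AlgebraicClosure k)).injective
    rw [map_mul, map_mul, h0, h1]
    ring
  rw [point_eq_mk2 Q, point_eq_mk2 Q', mk2_eq_mk2_iff]
  exact hcross

lemma eq_of_rep1_zero (Q Q' : Projectivization k (Fin 2 → k))
    (hQ : Q.rep 1 = 0) (hQ' : Q'.rep 1 = 0) : Q = Q' := by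
  rw [point_eq_mk2 Q, point_eq_mk2 Q', mk2_eq_mk2_iff, hQ, hQ']
  ring

lemma slope_inj (Q Q' : Projectivization k (Fin 2 → k))
    (h1 : Q.rep 1 ≠ 0) (h1' : Q'.rep 1 ≠ 0)
    (h : Q.rep 0 / Q.rep 1 = Q'.rep 0 / Q'.rep 1) : Q = Q' := by
  rw [point_eq_mk2 Q, point_eq_mk2 Q', mk2_eq_mk2_iff]
  rw [div_eq_div_iff h1 h1'] at h
  rw [h]; ring

/-! membership in PhiSet -/

lemma mem_PhiSet {qn : ℕ} (Pts : Fin qn → Projectivization k (Fin 2 → k))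
    (hPts : Function.Injective Pts)
    (d : ℕ) (t : ℝ) (htd : t ≤ (d : ℝ) + 1) (htq : t ≤ (qn : ℝ))
    (φ : P1Mor k) (hdeg : φ.deg ≤ d) (S₀ : Finset (Fin qn)) (hcard : S₀.card = min (d + 1) qn)
    (hcov : ∀ i ∈ S₀, φ.apply (embed k (Pts i)) = zeroPt k
      ∨ φ.apply (embed k (Pts i)) = infPt k) :
    φ ∈ PhiSet k Pts d t := by
  refine ⟨hdeg, ?_⟩
  set X := ({P | φ.apply P = zeroPt k ∨ φ.apply P = infPt k} ∩
      Set.range fun i => embed k (Pts i)) with hX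
  have hsub : (fun i => embed k (Pts i)) '' ↑S₀ ⊆ X := by
    rintro x ⟨i, hi, rfl⟩
    exact ⟨hcov i (by exact_mod_cast hi), ⟨i, rfl⟩⟩
  have hinj : Function.Injective (fun i => embed k (Pts i)) := fun i j hij =>
    hPts (embed_injective hij)
  have hfin : X.Finite := (Set.finite_range _).subset Set.inter_subset_right
  have hle : S₀.card ≤ X.ncard := by
    have himg : ((fun i => embed k (Pts i)) '' ↑S₀).ncard = S₀.card := by
      rw [Set.ncard_image_of_injective _ hinj, Set.ncard_coe_finset]
    rw [← himg]
    exact Set.ncard_le_ncard hsub hfin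
  calc t ≤ min ((d : ℝ) + 1) (qn : ℝ) := le_min htd htq
    _ = ((min (d + 1) qn : ℕ) : ℝ) := by rw [Nat.cast_min]; push_cast; ring_nf
    _ = (S₀.card : ℝ) := by rw [hcard]
    _ ≤ (X.ncard : ℝ) := by exact_mod_cast hle

/-! polynomial root helpers -/

lemma linprod_root {F : Type*} [Field F] {ι : Type*} (s : Finset ι) (a : ι → F)
    {z : F} (hz : Polynomial.eval z (∏ i ∈ s, (Polynomial.X - Polynomial.C (a i))) = 0) :
    ∃ i ∈ s, z = a i := by
  rw [Polynomial.eval_prod] at hz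
  obtain ⟨i, hi, hzi⟩ := Finset.prod_eq_zero_iff.mp hz
  rw [Polynomial.eval_sub, Polynomial.eval_X, Polynomial.eval_C, sub_eq_zero] at hzi
  exact ⟨i, hi, hzi⟩

lemma powlin_root {F : Type*} [Field F] (c : F) (n : ℕ)
    {z : F} (hz : Polynomial.eval z ((Polynomial.X - Polynomial.C c) ^ n) = 0) : z = c := by
  rw [Polynomial.eval_pow] at hz
  rcases Nat.eq_zero_or_pos n with h0 | h0
  · rw [h0, pow_zero] at hz
    exact absurd hz one_ne_zero
  · rw [pow_eq_zero_iff h0.ne'] at hz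
    rw [Polynomial.eval_sub, Polynomial.eval_X, Polynomial.eval_C, sub_eq_zero] at hz
    exact hz

lemma map_linprod {ι : Type*} (s : Finset ι) (a : ι → k) :
    (∏ i ∈ s, (Polynomial.X - Polynomial.C (a i))).map (algebraMap k (AlgebraicClosure k))
      = ∏ i ∈ s, (Polynomial.X - Polynomial.C (algebraMap k (AlgebraicClosure k) (a i))) := by
  rw [Polynomial.map_prod]
  refine Finset.prod_congr rfl fun i _ => ?_
  rw [Polynomial.map_sub, Polynomial.map_X, Polynomial.map_C]

lemma map_powlin (c : k) (n : ℕ) :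
    ((Polynomial.X - Polynomial.C c) ^ n).map (algebraMap k (AlgebraicClosure k))
      = (Polynomial.X - Polynomial.C (algebraMap k (AlgebraicClosure k) c)) ^ n := by
  rw [Polynomial.map_pow, Polynomial.map_sub, Polynomial.map_X, Polynomial.map_C]

lemma eval_map_ek (p : Polynomial k) (w : k) :
    Polynomial.eval (algebraMap k (AlgebraicClosure k) w)
        (p.map (algebraMap k (AlgebraicClosure k)))
      = algebraMap k (AlgebraicClosure k) (p.eval w) := by
  rw [Polynomial.eval_map, Polynomial.eval₂_at_apply]

lemma minpoly_eval_ne (α : AlgebraicClosure k) (hint : IsIntegral k α)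
    (he2 : 2 ≤ (minpoly k α).natDegree) (w : k) : (minpoly k α).eval w ≠ 0 := by
  intro hw
  have hdvd : (Polynomial.X - Polynomial.C w) ∣ minpoly k α :=
    Polynomial.dvd_iff_isRoot.mpr hw
  obtain ⟨g2, hg2⟩ := hdvd
  have hirr := minpoly.irreducible hint
  rcases hirr.isUnit_or_isUnit hg2 with hu | hu
  · exact Polynomial.not_isUnit_X_sub_C w hu
  · have hg2ne : g2 ≠ 0 := by
      intro h0
      rw [h0, mul_zero] at hg2
      exact minpoly.ne_zero hint hg2
    have : (minpoly k α).natDegree = 1 := by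
      rw [hg2, Polynomial.natDegree_mul (Polynomial.X_sub_C_ne_zero w) hg2ne,
        Polynomial.natDegree_X_sub_C, Polynomial.natDegree_eq_zero_of_isUnit hu]
    omega

/-! the backward inclusion -/

lemma backward_mem {qn : ℕ} (Pts : Fin qn → Projectivization k (Fin 2 → k))
    (hPts : Function.Injective Pts) (d : ℕ) (hd : 0 < d) (t : ℝ) (ht : 0 < t)
    (htd : t ≤ (d : ℝ) + 1) (htq : t ≤ (qn : ℝ))
    (P : Projectivization (AlgebraicClosure k) (Fin 2 → AlgebraicClosure k))
    (hP : degOver k P ≤ d) : P ∈ ZSet k Pts d t := by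
  classical
  have hq1 : 1 ≤ qn := by
    by_contra hc
    push_neg at hc
    interval_cases qn
    norm_num at htq
    linarith
  obtain ⟨S₀, -, hcard⟩ := Finset.exists_subset_card_eq (s := (Finset.univ : Finset (Fin qn)))
    (n := min (d + 1) qn) (by simpa using min_le_right (d + 1) qn)
  have hS₀pos : 0 < S₀.card := by rw [hcard]; omega
  obtain ⟨jstar, hjmem, hjprop⟩ :
      ∃ j ∈ S₀, ((Pts j).rep 1 = 0 ∨ ∀ i ∈ S₀, (Pts i).rep 1 ≠ 0) := by
    by_cases hinf : ∃ i ∈ S₀, (Pts i).rep 1 = 0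
    · obtain ⟨i, hi, h⟩ := hinf; exact ⟨i, hi, Or.inl h⟩
    · push_neg at hinf
      obtain ⟨j, hj⟩ := Finset.card_pos.mp hS₀pos
      exact ⟨j, hj, Or.inr hinf⟩
  set T := S₀.erase jstar with hT
  have haff : ∀ i ∈ T, (Pts i).rep 1 ≠ 0 := by
    intro i hi h0
    rcases hjprop with hj0 | hallaff
    · exact (Finset.ne_of_mem_erase hi) (hPts (eq_of_rep1_zero _ _ h0 hj0))
    · exact hallaff i (Finset.mem_of_mem_erase hi) h0
  set sl : Fin qn → k := fun i => (Pts i).rep 0 / (Pts i).rep 1 with hsl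
  set B : Finset k := Finset.image sl S₀ with hB
  obtain ⟨c₁, hc₁⟩ := Infinite.exists_notMem_finset B
  obtain ⟨c₀, hc₀⟩ := Infinite.exists_notMem_finset (insert c₁ B)
  have hc₀c₁ : c₀ ≠ c₁ := fun h => hc₀ (by rw [h]; exact Finset.mem_insert_self _ _)
  have hc₀B : c₀ ∉ B := fun h => hc₀ (Finset.mem_insert_of_mem h)
  have hslB : ∀ i ∈ S₀, sl i ∈ B := fun i hi => Finset.mem_image_of_mem sl hi
  have hTcard : T.card = min (d + 1) qn - 1 := by
    rw [hT, Finset.card_erase_of_mem hjmem, hcard]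
  have hTled : T.card ≤ d := by omega
  set p0 : Polynomial k := ∏ i ∈ T, (Polynomial.X - Polynomial.C (sl i)) with hp0
  set p : Polynomial k := p0 * (Polynomial.X - Polynomial.C c₁) ^ (d - T.card) with hp
  have hp0monic : p0.Monic :=
    Polynomial.monic_prod_of_monic _ _ fun i _ => Polynomial.monic_X_sub_C _
  have hpmonic : p.Monic := hp0monic.mul ((Polynomial.monic_X_sub_C c₁).pow _)
  have hp0deg : p0.natDegree = T.card := by
    rw [hp0, Polynomial.natDegree_prod _ _ fun i _ => Polynomial.X_sub_C_ne_zero _]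
    simp [Polynomial.natDegree_X_sub_C]
  have hpdeg : p.natDegree = d := by
    rw [hp, Polynomial.natDegree_mul hp0monic.ne_zero
      (pow_ne_zero _ (Polynomial.X_sub_C_ne_zero _)), hp0deg,
      Polynomial.natDegree_pow, Polynomial.natDegree_X_sub_C]
    omega
  have hpcoeffd : p.coeff d = 1 := by
    have := hpmonic.coeff_natDegree
    rwa [hpdeg] at this
  have hproot : ∀ i ∈ T, p.eval (sl i) = 0 := by
    intro i hi
    rw [hp, Polynomial.eval_mul]
    apply mul_eq_zero_of_left
    rw [hp0, Polynomial.eval_prod]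
    exact Finset.prod_eq_zero hi (by simp)
  have hpne : ∀ w : k, (∀ i ∈ T, w ≠ sl i) → w ≠ c₁ → p.eval w ≠ 0 := by
    intro w hw hw1 h0
    rw [hp, Polynomial.eval_mul] at h0
    rcases mul_eq_zero.mp h0 with h | h
    · obtain ⟨i, hi, rfl⟩ := linprod_root T sl h
      exact hw i hi rfl
    · exact hw1 (powlin_root _ _ h)
  have hpnec₀ : p.eval c₀ ≠ 0 := by
    refine hpne c₀ (fun i hi hcon => ?_) hc₀c₁
    exact hc₀B (hcon ▸ hslB i (Finset.mem_of_mem_erase hi))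
  have hpmaproot : ∀ z : AlgebraicClosure k,
      Polynomial.eval z (p.map (algebraMap k (AlgebraicClosure k))) = 0 →
      ∃ w : k, z = algebraMap k (AlgebraicClosure k) w
        ∧ ((∃ i ∈ T, w = sl i) ∨ w = c₁) := by
    intro z hz
    rw [hp, Polynomial.map_mul, map_linprod, map_powlin, Polynomial.eval_mul] at hz
    rcases mul_eq_zero.mp hz with h | h
    · obtain ⟨i, hi, rfl⟩ := linprod_root T _ h
      exact ⟨sl i, rfl, Or.inl ⟨i, hi, rfl⟩⟩
    · exact ⟨c₁, powlin_root _ _ h, Or.inr rfl⟩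
  by_cases hPrange : P ∈ Set.range (embed k)
  · by_cases hj0 : (Pts jstar).rep 1 = 0
    · -- Case A1 : P rational, designated point at infinity
      set r : Polynomial k := (Polynomial.X - Polynomial.C c₀) ^ d with hr
      set q' : Polynomial k := p - r with hq'
      have hrmonic : r.Monic := (Polynomial.monic_X_sub_C c₀).pow d
      have hrdeg : r.natDegree = d := by
        rw [hr, Polynomial.natDegree_pow, Polynomial.natDegree_X_sub_C, mul_one]
      have hq'deg : q'.natDegree ≤ d := by
        refine le_trans (Polynomial.natDegree_sub_le _ _) ?_
        exact max_le (le_of_eq hpdeg) (le_of_eq hrdeg)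
      have hq'coeff : q'.coeff d = 0 := by
        have hrc : r.coeff d = 1 := by
          have := hrmonic.coeff_natDegree; rwa [hrdeg] at this
        rw [hq', Polynomial.coeff_sub, hpcoeffd, hrc, sub_self]
      have hsub : p - q' = r := sub_sub_cancel _ _
      have hcop : IsCoprime p q' := by
        refine no_common_root_coprime p q' hpmonic.ne_zero fun z hz => ?_
        obtain ⟨hz1, hz2⟩ := hz
        have hzr : Polynomial.eval z (r.map (algebraMap k (AlgebraicClosure k))) = 0 := by
          rw [← hsub, Polynomial.map_sub, Polynomial.eval_sub, hz1, hz2, sub_zero]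
        have hzc₀ : z = algebraMap k (AlgebraicClosure k) c₀ := by
          rw [hr, map_powlin] at hzr
          exact powlin_root _ _ hzr
        rw [hzc₀, eval_map_ek] at hz1
        exact hpnec₀ (ek_eq_zero hz1)
      set φ := mkMor p q' d hd (le_of_eq hpdeg) hq'deg hcop
        (by intro hcon; rw [hpcoeffd] at hcon; exact one_ne_zero hcon.1) with hφ
      have hcov : ∀ i ∈ S₀, φ.apply (embed k (Pts i)) = zeroPt k
          ∨ φ.apply (embed k (Pts i)) = infPt k := by
        intro i hi
        by_cases hij : i = jstar
        · right
          apply apply_inf_of_evalG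
          rw [evalG_eq]
          exact SF_embed_zero d q' hq'deg (Pts i)
            (Or.inr ⟨by rw [hij]; exact hj0, hq'coeff⟩)
        · left
          apply apply_zero_of_evalF
          rw [evalF_eq]
          exact SF_embed_zero d p (le_of_eq hpdeg) (Pts i)
            (Or.inl ⟨haff i (Finset.mem_erase.mpr ⟨hij, hi⟩),
              hproot i (Finset.mem_erase.mpr ⟨hij, hi⟩)⟩)
      have hφmem : φ ∈ PhiSet k Pts d t :=
        mem_PhiSet Pts hPts d t htd htq φ (le_refl d) S₀ hcard hcov
      obtain ⟨Q, hQ⟩ := hPrange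
      unfold ZSet
      exact Set.mem_biUnion hφmem (by rw [← hQ]; exact apply_embed_mem φ Q)
    · -- Case A2 : P rational, designated point affine
      set q' : Polynomial k := Polynomial.X - Polynomial.C (sl jstar) with hq'
      have hq'deg : q'.natDegree ≤ d := by
        rw [hq', Polynomial.natDegree_X_sub_C]; omega
      have hpjs : p.eval (sl jstar) ≠ 0 := by
        refine hpne _ (fun i hi hcon => ?_) (fun hcon => hc₁ (hcon ▸ hslB jstar hjmem))
        exact (Finset.ne_of_mem_erase hi)
          (hPts (slope_inj _ _ (haff i hi) hj0 hcon.symm))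
      have hcop : IsCoprime p q' := by
        refine no_common_root_coprime p q' hpmonic.ne_zero fun z hz => ?_
        obtain ⟨hz1, hz2⟩ := hz
        have hzjs : z = algebraMap k (AlgebraicClosure k) (sl jstar) := by
          rw [hq', Polynomial.map_sub, Polynomial.map_X, Polynomial.map_C,
            Polynomial.eval_sub, Polynomial.eval_X, Polynomial.eval_C, sub_eq_zero] at hz2
          exact hz2
        rw [hzjs, eval_map_ek] at hz1
        exact hpjs (ek_eq_zero hz1)
      set φ := mkMor p q' d hd (le_of_eq hpdeg) hq'deg hcop
        (by intro hcon; rw [hpcoeffd] at hcon; exact one_ne_zero hcon.1) with hφ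
      have hcov : ∀ i ∈ S₀, φ.apply (embed k (Pts i)) = zeroPt k
          ∨ φ.apply (embed k (Pts i)) = infPt k := by
        intro i hi
        by_cases hij : i = jstar
        · right
          apply apply_inf_of_evalG
          rw [evalG_eq]
          refine SF_embed_zero d q' hq'deg (Pts i)
            (Or.inl ⟨by rw [hij]; exact hj0, ?_⟩)
          rw [hij]
          rw [hq', Polynomial.eval_sub, Polynomial.eval_X, Polynomial.eval_C, sub_self]
        · left
          apply apply_zero_of_evalF
          rw [evalF_eq]
          exact SF_embed_zero d p (le_of_eq hpdeg) (Pts i)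
            (Or.inl ⟨haff i (Finset.mem_erase.mpr ⟨hij, hi⟩),
              hproot i (Finset.mem_erase.mpr ⟨hij, hi⟩)⟩)
      have hφmem : φ ∈ PhiSet k Pts d t :=
        mem_PhiSet Pts hPts d t htd htq φ (le_refl d) S₀ hcard hcov
      obtain ⟨Q, hQ⟩ := hPrange
      unfold ZSet
      exact Set.mem_biUnion hφmem (by rw [← hQ]; exact apply_embed_mem φ Q)
  · -- Case B : P irrational
    have hy : P.rep 1 ≠ 0 := fun h => hPrange ⟨_, (rep1_zero_eq_embed P h).symm⟩
    set α := P.rep 0 / P.rep 1 with hα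
    have hint : IsIntegral k α := Algebra.IsIntegral.isIntegral _
    set m := minpoly k α with hm
    set e := m.natDegree with he
    have hdeg_eq : degOver k P = e := degOver_eq P hy
    have hed : e ≤ d := by rw [← hdeg_eq]; exact hP
    have he2 : 2 ≤ e := by
      by_contra hcon
      push_neg at hcon
      exact hPrange (embed_mem_of_degOver_le_one P (by rw [hdeg_eq]; omega))
    have hmrat : ∀ w : k, m.eval w ≠ 0 := minpoly_eval_ne α hint he2
    have hmmonic : m.Monic := minpoly.monic hint
    set r : Polynomial k := m * (Polynomial.X - Polynomial.C c₀) ^ (d - e) with hr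
    have hrmonic : r.Monic := hmmonic.mul ((Polynomial.monic_X_sub_C c₀).pow _)
    have hrdeg : r.natDegree = d := by
      rw [hr, Polynomial.natDegree_mul hmmonic.ne_zero
        (pow_ne_zero _ (Polynomial.X_sub_C_ne_zero _)),
        Polynomial.natDegree_pow, Polynomial.natDegree_X_sub_C, ← he]
      omega
    have hrcoeffd : r.coeff d = 1 := by
      have := hrmonic.coeff_natDegree; rwa [hrdeg] at this
    have hrratne : ∀ w : k, w ≠ c₀ → r.eval w ≠ 0 := by
      intro w hw
      rw [hr, Polynomial.eval_mul, Polynomial.eval_pow, Polynomial.eval_sub,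
        Polynomial.eval_X, Polynomial.eval_C]
      exact mul_ne_zero (hmrat w) (pow_ne_zero _ (sub_ne_zero.mpr hw))
    set c : k := if (Pts jstar).rep 1 = 0 then 1
      else p.eval (sl jstar) / r.eval (sl jstar) with hc
    have hjslne : (Pts jstar).rep 1 ≠ 0 →
        p.eval (sl jstar) ≠ 0 ∧ r.eval (sl jstar) ≠ 0 := by
      intro hjaff
      constructor
      · refine hpne _ (fun i hi hcon => ?_) (fun hcon => hc₁ (hcon ▸ hslB jstar hjmem))
        exact (Finset.ne_of_mem_erase hi)
          (hPts (slope_inj _ _ (haff i hi) hjaff hcon.symm))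
      · exact hrratne _ (fun hcon => hc₀B (hcon ▸ hslB jstar hjmem))
    have hcne : c ≠ 0 := by
      rw [hc]
      split
      · exact one_ne_zero
      · next hjaff => exact div_ne_zero (hjslne hjaff).1 (hjslne hjaff).2
    set q' : Polynomial k := p - Polynomial.C c * r with hq'
    have hsub : p - q' = Polynomial.C c * r := sub_sub_cancel _ _
    have hCrdeg : (Polynomial.C c * r).natDegree ≤ d :=
      le_trans (Polynomial.natDegree_C_mul_le _ _) (le_of_eq hrdeg)
    have hq'deg : q'.natDegree ≤ d := by
      refine le_trans (Polynomial.natDegree_sub_le _ _) ?_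
      exact max_le (le_of_eq hpdeg) hCrdeg
    have hcop : IsCoprime p q' := by
      refine no_common_root_coprime p q' hpmonic.ne_zero fun z hz => ?_
      obtain ⟨hz1, hz2⟩ := hz
      have hzr : Polynomial.eval z (r.map (algebraMap k (AlgebraicClosure k))) = 0 := by
        have h0 : Polynomial.eval z
            ((Polynomial.C c * r).map (algebraMap k (AlgebraicClosure k))) = 0 := by
          rw [← hsub, Polynomial.map_sub, Polynomial.eval_sub, hz1, hz2, sub_zero]
        rw [Polynomial.map_mul, Polynomial.map_C, Polynomial.eval_mul,
          Polynomial.eval_C] at h0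
        exact (mul_eq_zero.mp h0).resolve_left fun hcc => hcne (ek_eq_zero hcc)
      rw [hr, Polynomial.map_mul, map_powlin, Polynomial.eval_mul] at hzr
      rcases mul_eq_zero.mp hzr with hzm | hzc
      · obtain ⟨w, rfl, -⟩ := hpmaproot z hz1
        rw [eval_map_ek] at hzm
        exact hmrat w (ek_eq_zero hzm)
      · have hzz := powlin_root _ _ hzc
        rw [hzz, eval_map_ek] at hz1
        exact hpnec₀ (ek_eq_zero hz1)
    set φ := mkMor p q' d hd (le_of_eq hpdeg) hq'deg hcop
      (by intro hcon; rw [hpcoeffd] at hcon; exact one_ne_zero hcon.1) with hφ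
    have hcov : ∀ i ∈ S₀, φ.apply (embed k (Pts i)) = zeroPt k
        ∨ φ.apply (embed k (Pts i)) = infPt k := by
      intro i hi
      by_cases hij : i = jstar
      · right
        apply apply_inf_of_evalG
        rw [evalG_eq]
        refine SF_embed_zero d q' hq'deg (Pts i) ?_
        by_cases hjaff : (Pts jstar).rep 1 = 0
        · refine Or.inr ⟨by rw [hij]; exact hjaff, ?_⟩
          rw [hq', Polynomial.coeff_sub, hpcoeffd, Polynomial.coeff_C_mul, hrcoeffd,
            hc, if_pos hjaff]
          norm_num
        · refine Or.inl ⟨by rw [hij]; exact hjaff, ?_⟩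
          rw [hij]
          rw [hq', Polynomial.eval_sub,
            show Polynomial.eval (sl jstar) (Polynomial.C c * r)
              = c * Polynomial.eval (sl jstar) r from by
                rw [Polynomial.eval_mul, Polynomial.eval_C],
            hc, if_neg hjaff, div_mul_cancel₀ _ (hjslne hjaff).2, sub_self]
      · left
        apply apply_zero_of_evalF
        rw [evalF_eq]
        exact SF_embed_zero d p (le_of_eq hpdeg) (Pts i)
          (Or.inl ⟨haff i (Finset.mem_erase.mpr ⟨hij, hi⟩),
            hproot i (Finset.mem_erase.mpr ⟨hij, hi⟩)⟩)
    have hφmem : φ ∈ PhiSet k Pts d t :=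
      mem_PhiSet Pts hPts d t htd htq φ (le_refl d) S₀ hcard hcov
    have hFG : φ.evalF (P.rep 0) (P.rep 1) = φ.evalG (P.rep 0) (P.rep 1) := by
      refine sub_eq_zero.mp ?_
      have h1 : SF k d (fun i => p.coeff i) (P.rep 0) (P.rep 1)
          - SF k d (fun i => q'.coeff i) (P.rep 0) (P.rep 1) = 0 := by
        rw [SF_sub]
        have hfun : (fun i : Fin (d + 1) => p.coeff (i : ℕ) - q'.coeff (i : ℕ))
            = fun i : Fin (d + 1) => (Polynomial.C c * r).coeff (i : ℕ) := by
          funext i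
          rw [← Polynomial.coeff_sub, hsub]
        rw [hfun]
        rw [SF_affine d _ hCrdeg _ _ hy]
        have hmev : Polynomial.eval (P.rep 0 / P.rep 1)
            (m.map (algebraMap k (AlgebraicClosure k))) = 0 := by
          rw [Polynomial.eval_map, ← Polynomial.aeval_def]
          exact minpoly.aeval k α
        rw [Polynomial.map_mul, Polynomial.eval_mul, hr, Polynomial.map_mul,
          Polynomial.eval_mul, hmev]
        ring
      exact h1
    have happ : φ.apply P
        = embed k (Projectivization.mk k ![(1 : k), 1] (vec2_ne fun h => one_ne_zero h.1)) :=
      apply_rational φ P 1 1 (fun h => one_ne_zero h.1) (by rw [hFG])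
    unfold ZSet
    exact Set.mem_biUnion hφmem ⟨_, happ.symm⟩

end ZPInfra


/-- If `t ≤ d + 1` and `t ≤ deg D`, then `Z(D,d,t,k) = {P ∈ ℙ¹(k̄) : [k(P):k] ≤ d}`. -/
theorem Z_eq_bounded_degree (k : Type*) [Field k] [NumberField k]
    {q : ℕ} (Pts : Fin q → Projectivization k (Fin 2 → k)) (hPts : Function.Injective Pts)
    (d : ℕ) (hd : 0 < d) (t : ℝ) (ht : 0 < t) (htd : t ≤ (d : ℝ) + 1) (htq : t ≤ (q : ℝ)) :
    ZSet k Pts d t =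
      {P : Projectivization (AlgebraicClosure k) (Fin 2 → AlgebraicClosure k) |
        degOver k P ≤ d} := by
  ext P
  simp only [Set.mem_setOf_eq]
  constructor
  · intro hP
    unfold ZSet at hP
    rw [Set.mem_iUnion₂] at hP
    obtain ⟨φ, hφ, hmem⟩ := hP
    exact forward_degOver φ d hd hφ.1 P hmem
  · intro hP
    exact backward_mem Pts hPts d hd t ht htd htq P hP
end
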